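/- (Partial fraction decomposition for the connector) For any real 0 < q < 1, any positive integer n, and an indeterminate x, ∑_{m=1}^{n} ([m]_q/([m]_q − q^m x)) · (-1)^{m-1} q^{m(m-1)/2} / ([m]_q! [n−m]_q!) = 1 / ∏_{h=1}^{n} ([h]_q − q^h x), as an identity of rational functions in x. -/

import Mathlib

noncomputable def qint (q : ℝ) (m : ℕ) : ℝ := (1 - q ^ m) / (1 - q)

noncomputable def qfact (q : ℝ) (m : ℕ) : ℝ := ∏ a ∈ Finset.Icc 1 m, qint q a

/-- The connector `C(m,n,q,x)`. -/
noncomputable def connector (q : ℝ) (m n : ℕ) (x : ℝ) : ℝ :=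
  (-1 : ℝ) ^ (m - 1) * q ^ (m * (m + 1) / 2) *
    (∏ h ∈ Finset.Icc 1 n, (qint q h - q ^ h * x)) / (qfact q m * qfact q (n - m))

lemma qint_pos {q : ℝ} (hq0 : 0 < q) (hq1 : q < 1) {m : ℕ} (hm : m ≠ 0) : 0 < qint q m := by
  have h1 : q ^ m < 1 := pow_lt_one₀ hq0.le hq1 hm
  exact div_pos (by linarith) (by linarith)

lemma qfact_pos {q : ℝ} (hq0 : 0 < q) (hq1 : q < 1) (m : ℕ) : 0 < qfact q m :=
  Finset.prod_pos fun a ha => qint_pos hq0 hq1 (by have := (Finset.mem_Icc.mp ha).1; omega)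

lemma qfact_succ (q : ℝ) (m : ℕ) : qfact q (m+1) = qfact q m * qint q (m+1) := by
  rw [qfact, Finset.prod_Icc_succ_top (by omega : 1 ≤ m+1)]; rfl

lemma qint_one {q : ℝ} (hq : q ≠ 1) : qint q 1 = 1 := by
  rw [qint, pow_one, div_self (sub_ne_zero.mpr (Ne.symm hq))]

lemma qfact_zero (q : ℝ) : qfact q 0 = 1 := by simp [qfact]

lemma qfact_one {q : ℝ} (hq : q ≠ 1) : qfact q 1 = 1 := by
  simp [qfact, qint_one hq]

lemma key_alg {q : ℝ} (hq1 : q < 1) (m k : ℕ) (x : ℝ) :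
    (qint q (m+k) - q^(m+k) * x) - q^k * (qint q m - q^m * x) = qint q k := by
  have h : (1:ℝ) - q ≠ 0 := by intro h; nlinarith
  simp only [qint]
  field_simp
  ring

lemma D_x0 {q : ℝ} (hq0 : 0 < q) (hq1 : q < 1) (m k : ℕ) :
    qint q m - q^m * (qint q (m+k) / q^(m+k)) = -(qint q k / q^k) := by
  have hq : (q:ℝ)^(m+k) ≠ 0 := pow_ne_zero _ hq0.ne'
  have hk' : (q:ℝ)^k ≠ 0 := pow_ne_zero _ hq0.ne'
  have h := key_alg hq1 m k (qint q (m+k) / q^(m+k))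
  have h0 : qint q (m+k) - q^(m+k) * (qint q (m+k)/q^(m+k)) = 0 := by field_simp; ring
  rw [h0, zero_sub] at h
  have h2 : qint q m - q^m * (qint q (m+k) / q^(m+k)) = (-qint q k)/q^k := by
    rw [eq_div_iff hk']; linear_combination -h
  rw [h2, neg_div]
lemma sum_Icc_id' (n : ℕ) : ∑ h ∈ Finset.Icc 1 n, h = (n+1)*n/2 := by
  induction n with
  | zero => simp
  | succ n ih =>
    rw [Finset.sum_Icc_succ_top (by omega), ih]
    have := Nat.triangle_succ (n+1)
    simp at this
    omega

lemma sum_Icc_reflect (n : ℕ) (f : ℕ → ℕ) :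
    ∑ h ∈ Finset.Icc 1 n, f (n+1-h) = ∑ h ∈ Finset.Icc 1 n, f h := by
  refine Finset.sum_nbij' (fun h => n+1-h) (fun h => n+1-h) ?_ ?_ ?_ ?_ ?_ <;>
    simp only [Finset.mem_Icc] <;> intro a ha
  · omega
  · omega
  · omega
  · omega
  · trivial

lemma prod_Icc_reflect (n : ℕ) (f : ℕ → ℝ) :
    ∏ h ∈ Finset.Icc 1 n, f (n+1-h) = ∏ h ∈ Finset.Icc 1 n, f h := by
  refine Finset.prod_nbij' (fun h => n+1-h) (fun h => n+1-h) ?_ ?_ ?_ ?_ ?_ <;>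
    simp only [Finset.mem_Icc] <;> intro a ha
  · omega
  · omega
  · omega
  · omega
  · trivial

lemma prod_x0 {q : ℝ} (hq0 : 0 < q) (hq1 : q < 1) (n : ℕ) :
    ∏ h ∈ Finset.Icc 1 n, (qint q h - q^h * (qint q (n+1)/q^(n+1))) =
      (-1)^n * qfact q n / q^((n+1)*n/2) := by
  have step : ∀ h ∈ Finset.Icc 1 n, qint q h - q^h * (qint q (n+1)/q^(n+1)) =
      -(qint q (n+1-h)/q^(n+1-h)) := by
    intro h hh
    obtain ⟨h1, h2⟩ := Finset.mem_Icc.mp hh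
    set k := n+1-h with hk
    rw [show n+1 = h+k by omega]
    exact D_x0 hq0 hq1 h k
  rw [Finset.prod_congr rfl step, prod_Icc_reflect n (fun j => -(qint q j/q^j))]
  have : ∀ j ∈ Finset.Icc 1 n, -(qint q j/q^j) = (-1) * (qint q j * (q^j)⁻¹) := by
    intro j hj; ring
  rw [Finset.prod_congr rfl this, Finset.prod_mul_distrib, Finset.prod_mul_distrib,
    Finset.prod_const, Finset.prod_inv_distrib, Finset.prod_pow_eq_pow_sum,
    sum_Icc_id', Nat.card_Icc]
  simp [qfact, div_eq_mul_inv, mul_assoc]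


theorem connector_partial_fraction (q : ℝ) (hq0 : 0 < q) (hq1 : q < 1) (n : ℕ) (hn : 0 < n)
    (x : ℝ) (hx : ∀ h ∈ Finset.Icc 1 n, qint q h - q ^ h * x ≠ 0) :
    ∑ m ∈ Finset.Icc 1 n,
        qint q m / (qint q m - q ^ m * x) *
          ((-1 : ℝ) ^ (m - 1) * q ^ (m * (m - 1) / 2) / (qfact q m * qfact q (n - m))) =
      1 / ∏ h ∈ Finset.Icc 1 n, (qint q h - q ^ h * x) := by

  induction n, hn using Nat.le_induction generalizing x with
  | base =>
    simp only [Finset.Icc_self, Finset.sum_singleton, Finset.prod_singleton]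
    rw [qint_one hq1.ne, qfact_one hq1.ne]
    norm_num [qfact_zero]
  | succ n hn ih =>
    have hqne : q ≠ 0 := hq0.ne'
    have hx' : ∀ h ∈ Finset.Icc 1 n, qint q h - q ^ h * x ≠ 0 := fun h hh =>
      hx h (Finset.mem_Icc.mpr ⟨(Finset.mem_Icc.mp hh).1, by
        have := (Finset.mem_Icc.mp hh).2; omega⟩)
    set x0 : ℝ := qint q (n+1) / q^(n+1) with hx0def
    have hDx0 : ∀ h ∈ Finset.Icc 1 n, qint q h - q^h * x0 = -(qint q (n+1-h)/q^(n+1-h)) := by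
      intro h hh
      obtain ⟨h1, h2⟩ := Finset.mem_Icc.mp hh
      rw [hx0def]
      set k := n+1-h with hk
      rw [show n+1 = h+k by omega]
      exact D_x0 hq0 hq1 h k
    have hx0ne : ∀ h ∈ Finset.Icc 1 n, qint q h - q^h * x0 ≠ 0 := by
      intro h hh
      rw [hDx0 h hh]
      obtain ⟨h1, h2⟩ := Finset.mem_Icc.mp hh
      have h3 := qint_pos hq0 hq1 (show n+1-h ≠ 0 by omega)
      have h4 : (0:ℝ) < q^(n+1-h) := pow_pos hq0 _
      have : 0 < qint q (n+1-h)/q^(n+1-h) := div_pos h3 h4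
      intro hc
      rw [neg_eq_zero] at hc
      exact this.ne' hc
    have ih1 := ih x hx'
    have ih2 := ih x0 hx0ne
    have hDtop : qint q (n+1) - q^(n+1) * x ≠ 0 :=
      hx (n+1) (Finset.mem_Icc.mpr ⟨by omega, le_refl _⟩)
    have hPn : (∏ h ∈ Finset.Icc 1 n, (qint q h - q ^ h * x)) ≠ 0 :=
      Finset.prod_ne_zero_iff.mpr hx'
    have hP0 : ∏ h ∈ Finset.Icc 1 n, (qint q h - q^h * x0)
        = (-1)^n * qfact q n / q^((n+1)*n/2) := by
      rw [hx0def]; exact prod_x0 hq0 hq1 n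
    -- pointwise decomposition of summands for m ∈ Icc 1 n
    have point : ∀ m ∈ Finset.Icc 1 n,
        qint q m / (qint q m - q ^ m * x) *
          ((-1 : ℝ) ^ (m - 1) * q ^ (m * (m - 1) / 2) / (qfact q m * qfact q (n + 1 - m)))
        = (1 / (qint q (n+1) - q^(n+1) * x)) *
            (qint q m / (qint q m - q ^ m * x) *
              ((-1 : ℝ) ^ (m - 1) * q ^ (m * (m - 1) / 2) / (qfact q m * qfact q (n - m)))
            - qint q m / (qint q m - q ^ m * x0) *
              ((-1 : ℝ) ^ (m - 1) * q ^ (m * (m - 1) / 2) / (qfact q m * qfact q (n - m)))) := by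
      intro m hm
      obtain ⟨h1, h2⟩ := Finset.mem_Icc.mp hm
      have hk1 : n + 1 - m = (n - m) + 1 := by omega
      rw [hk1, qfact_succ, hDx0 m hm, hk1]
      have hrel : qint q (n+1) - q^(n+1)*x
          = qint q ((n-m)+1) + q^((n-m)+1) * (qint q m - q^m * x) := by
        have h := key_alg hq1 m ((n-m)+1) x
        rw [show m+((n-m)+1) = n+1 by omega] at h
        linarith
      rw [hrel]
      have ha : qint q m - q^m * x ≠ 0 := hx' m hm
      have hc : qint q ((n-m)+1) ≠ 0 := (qint_pos hq0 hq1 (by omega)).ne'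
      have hF : qfact q m ≠ 0 := (qfact_pos hq0 hq1 m).ne'
      have hG : qfact q (n-m) ≠ 0 := (qfact_pos hq0 hq1 (n-m)).ne'
      have hqk : (q:ℝ)^((n-m)+1) ≠ 0 := pow_ne_zero _ hqne
      have hb : qint q ((n-m)+1) + q^((n-m)+1) * (qint q m - q^m * x) ≠ 0 := by
        rw [← hrel]; exact hDtop
      field_simp
      rw [eq_div_iff (by rw [mul_comm]; exact hb)]
      ring
    rw [Finset.sum_Icc_succ_top (by omega : 1 ≤ n+1), Finset.sum_congr rfl point,
      ← Finset.mul_sum, Finset.sum_sub_distrib]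
    rw [ih1, ih2, hP0, Finset.prod_Icc_succ_top (by omega : 1 ≤ n+1)]
    simp only [Nat.add_sub_cancel, Nat.sub_self, qfact_zero, qfact_succ]
    have hfn : qfact q n ≠ 0 := (qfact_pos hq0 hq1 n).ne'
    have hi : qint q (n+1) ≠ 0 := (qint_pos hq0 hq1 (by omega)).ne'
    have hT : (q:ℝ)^((n+1)*n/2) ≠ 0 := pow_ne_zero _ hqne
    have hneg : ((-1:ℝ)^n) * ((-1:ℝ)^n) = 1 := by
      rw [← mul_pow]; norm_num
    rcases Nat.even_or_odd n with hpar | hpar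
    · rw [hpar.neg_one_pow]
      field_simp [hDtop, hPn, hfn, hi, hT]
      ring
    · rw [hpar.neg_one_pow]
      field_simp [hDtop, hPn, hfn, hi, hT]
      ring
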